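/- For every ε > 0 there exists K ∈ ℕ such that for all κ ≥ K, all configurations σ ∈ S, and all actions a ∈ A, one has Σ_{η∈U} P̃_κ(η|σ, a) ≥ 1 − ε; equivalently, Σ_{η∈U} P̃_κ(η|σ, a) → 1 as κ → ∞, uniformly in σ and a. -/

import Mathlib

open Filter Topology

namespace IsingS

open scoped Classical

variable (N : ℕ) [NeZero N]

/-- Vertex set: the N×N discrete torus. -/
abbrev V := ZMod N × ZMod N

/-- Configurations: `true` encodes spin +1, `false` encodes spin -1. -/
abbrev Cfg := V N → Bool

/-- The spin value in ℤ of a Boolean spin. -/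
def spin (b : Bool) : ℤ := if b then 1 else -1

/-- The four nearest neighbors of a vertex. -/
def nbrFinset (i : V N) : Finset (V N) :=
  {i + ((1 : ZMod N), (0 : ZMod N)), i + ((-1 : ZMod N), (0 : ZMod N)),
   i + ((0 : ZMod N), (1 : ZMod N)), i + ((0 : ZMod N), (-1 : ZMod N))}

/-- The Hamiltonian with external magnetic field `h`. -/
noncomputable def H (h : ℝ) (σ : Cfg N) : ℝ :=
  -(1/2) * (((∑ i : V N, ∑ j ∈ nbrFinset N i, spin (σ i) * spin (σ j)) : ℤ) : ℝ)
    - h * (((∑ i : V N, spin (σ i)) : ℤ) : ℝ)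

/-- Flip the spin at vertex `i`. -/
def flip (σ : Cfg N) (i : V N) : Cfg N := Function.update σ i (!σ i)

/-- Spin `i` is susceptible in `σ` if flipping it does not increase the energy. -/
def susceptible (h : ℝ) (σ : Cfg N) (i : V N) : Prop :=
  H N h (flip N σ i) ≤ H N h σ

/-- A configuration is robust if it has no susceptible spins. -/
def robust (h : ℝ) (σ : Cfg N) : Prop := ∀ i : V N, ¬ susceptible N h σ i

/-- The set of robust configurations. -/
noncomputable def Uset (h : ℝ) : Finset (Cfg N) :=
  Finset.univ.filter (fun σ => robust N h σ)

/-- Metropolis rate of flipping spin `i` from `σ` at inverse temperature `β`. -/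
noncomputable def metroRate (h β : ℝ) (σ : Cfg N) (i : V N) : ℝ :=
  (1 / (N : ℝ) ^ 2) * min 1 (Real.exp (-β * (H N h (flip N σ i) - H N h σ)))

/-- The Metropolis transition matrix at inverse temperature `β`. -/
noncomputable def pβ (h β : ℝ) (σ η : Cfg N) : ℝ :=
  if η = σ then 1 - ∑ i : V N, metroRate N h β σ i
  else ∑ i ∈ Finset.univ.filter (fun i => flip N σ i = η), metroRate N h β σ i

/-- The low-temperature dynamics `p̃ = lim_{β→∞} p_β`. -/
noncomputable def ptilde (h : ℝ) (σ η : Cfg N) : ℝ :=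
  limUnder atTop (fun β : ℝ => pβ N h β σ η)

/-- The low-temperature dynamics as a matrix. -/
noncomputable def Pmat (h : ℝ) : Matrix (Cfg N) (Cfg N) ℝ :=
  fun σ η => ptilde N h σ η

/-- κ-step low-temperature transition probabilities, started from the
post-decision configuration of action `a` (an element of `V ∪ {0}`,
encoded as `Option (V N)` with `none` playing the role of `0`). -/
abbrev Act := Option (V N)

/-- Post-decision configuration. -/
def post (σ : Cfg N) : Act N → Cfg N
  | none => σ
  | some i => flip N σ i

/-- `P̃_κ(η | σ, a)`. -/
noncomputable def Ptilκ (h : ℝ) (κ : ℕ) (σ : Cfg N) (a : Act N) (η : Cfg N) : ℝ :=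
  (Pmat N h ^ κ) (post N σ a) η

/-- `Q_κ(η | σ, a)`, the κ-step probabilities conditioned on ending in a robust
configuration (with the convention 0/0 = 0). -/
noncomputable def Qκ (h : ℝ) (κ : ℕ) (σ : Cfg N) (a : Act N) (η : Cfg N) : ℝ :=
  if robust N h η then
    Ptilκ N h κ σ a η / ∑ η' ∈ Uset N h, Ptilκ N h κ σ a η'
  else 0



/-! ### Auxiliary lemmas -/

section Aux

set_option linter.unusedSectionVars false

lemma spin_not (b : Bool) : spin (!b) = -spin b := by cases b <;> simp [spin]

lemma flip_apply (σ : Cfg N) (i j : V N) :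
    flip N σ i j = if j = i then !σ i else σ j := by
  by_cases hj : j = i
  · subst hj; simp [flip]
  · rw [if_neg hj]; simp [flip, Function.update_of_ne hj]

lemma flip_ne (σ : Cfg N) (i : V N) : flip N σ i ≠ σ := by
  intro hc
  have := congrFun hc i
  simp [flip] at this

lemma mem_nbr_symm {i j : V N} (hj : j ∈ nbrFinset N i) : i ∈ nbrFinset N j := by
  simp only [nbrFinset, Finset.mem_insert, Finset.mem_singleton] at hj ⊢
  rcases hj with rfl | rfl | rfl | rfl
  · right; left; ext <;> simp
  · left; ext <;> simp
  · right; right; right; ext <;> simp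
  · right; right; left; ext <;> simp

lemma not_mem_nbr_self (hN : 3 ≤ N) (i : V N) : i ∉ nbrFinset N i := by
  haveI : Fact (1 < N) := ⟨by omega⟩
  have h1 : (1 : ZMod N) ≠ 0 := one_ne_zero
  have h2 : (-1 : ZMod N) ≠ 0 := by simp [neg_ne_zero.mpr h1]
  simp only [nbrFinset, Finset.mem_insert, Finset.mem_singleton]
  push_neg
  refine ⟨?_, ?_, ?_, ?_⟩ <;> intro hc
  · have := congrArg Prod.fst hc
    simp only [Prod.fst_add] at this
    exact h1 (left_eq_add.mp this)
  · have := congrArg Prod.fst hc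
    simp only [Prod.fst_add] at this
    exact h2 (left_eq_add.mp this)
  · have := congrArg Prod.snd hc
    simp only [Prod.snd_add] at this
    exact h1 (left_eq_add.mp this)
  · have := congrArg Prod.snd hc
    simp only [Prod.snd_add] at this
    exact h2 (left_eq_add.mp this)

lemma sum_spin_flip (σ : Cfg N) (i : V N) :
    ∑ j : V N, spin (flip N σ i j) = ∑ j : V N, spin (σ j) - 2 * spin (σ i) := by
  have key : ∑ j : V N, (spin (flip N σ i j) - spin (σ j))
      = ∑ j : V N, (if j = i then -2 * spin (σ i) else 0) := by
    refine Finset.sum_congr rfl fun j _ => ?_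
    rw [flip_apply]
    by_cases hj : j = i
    · subst hj; rw [if_pos rfl, if_pos rfl, spin_not]; ring
    · rw [if_neg hj, if_neg hj]; ring
  rw [Finset.sum_ite_eq' Finset.univ i (fun _ => -2 * spin (σ i)), if_pos (Finset.mem_univ i)]
    at key
  rw [Finset.sum_sub_distrib] at key
  linarith

lemma double_sum_flip (hN : 3 ≤ N) (σ : Cfg N) (i : V N) :
    ∑ i' : V N, ∑ j ∈ nbrFinset N i', spin (flip N σ i i') * spin (flip N σ i j)
      = ∑ i' : V N, ∑ j ∈ nbrFinset N i', spin (σ i') * spin (σ j)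
        - 4 * spin (σ i) * ∑ j ∈ nbrFinset N i, spin (σ j) := by
  set s : V N → ℤ := fun j => spin (σ j) with hs
  have hflip : ∀ j, spin (flip N σ i j) = if j = i then -s i else s j := by
    intro j; rw [flip_apply]
    by_cases hj : j = i
    · rw [if_pos hj, if_pos hj, spin_not]
    · rw [if_neg hj, if_neg hj]
  have hninbr : ∀ j ∈ nbrFinset N i, j ≠ i := by
    intro j hj hji; exact not_mem_nbr_self N hN i (hji ▸ hj)
  set F : V N → ℤ := fun i' => ∑ j ∈ nbrFinset N i', spin (flip N σ i i') * spin (flip N σ i j)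
    with hF
  set G : V N → ℤ := fun i' => ∑ j ∈ nbrFinset N i', s i' * s j with hG
  set m : ℤ := ∑ j ∈ nbrFinset N i, s j with hm
  have hFi : F i - G i = -2 * s i * m := by
    have h1 : F i = -s i * m := by
      rw [hF]
      simp only
      rw [hm, Finset.mul_sum]
      refine Finset.sum_congr rfl fun j hj => ?_
      rw [hflip, hflip, if_pos rfl, if_neg (hninbr j hj)]
    have h2 : G i = s i * m := by rw [hG]; simp only; rw [hm, Finset.mul_sum]
    rw [h1, h2]; ring
  have herase : ∀ i' ∈ Finset.univ.erase i,
      F i' - G i' = if i' ∈ nbrFinset N i then -2 * s i' * s i else 0 := by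
    intro i' hi'
    have hi'i : i' ≠ i := Finset.ne_of_mem_erase hi'
    have h1 : F i' - G i'
        = ∑ j ∈ nbrFinset N i', (if j = i then -2 * s i' * s i else 0) := by
      rw [hF, hG]; simp only
      rw [← Finset.sum_sub_distrib]
      refine Finset.sum_congr rfl fun j hj => ?_
      rw [hflip, hflip, if_neg hi'i]
      by_cases hji : j = i
      · rw [if_pos hji, if_pos hji, hji]; ring
      · rw [if_neg hji, if_neg hji]; ring
    rw [h1, Finset.sum_ite_eq' (nbrFinset N i') i (fun _ => -2 * s i' * s i)]
    exact if_congr ⟨fun hmm => mem_nbr_symm N hmm, fun hmm => mem_nbr_symm N hmm⟩ rfl rfl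
  have hfilter : (Finset.univ.erase i).filter (· ∈ nbrFinset N i) = nbrFinset N i := by
    ext j
    simp only [Finset.mem_filter, Finset.mem_erase, Finset.mem_univ, true_and]
    exact ⟨fun hj => hj.2, fun hj => ⟨⟨hninbr j hj, trivial⟩, hj⟩⟩
  have hsum_erase : ∑ i' ∈ Finset.univ.erase i, (F i' - G i') = -2 * s i * m := by
    rw [Finset.sum_congr rfl herase, ← Finset.sum_filter, hfilter]
    rw [hm, Finset.mul_sum]
    refine Finset.sum_congr rfl fun j _ => ?_
    ring
  have key : ∑ i' : V N, (F i' - G i') = -4 * s i * m := by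
    rw [← Finset.add_sum_erase _ _ (Finset.mem_univ i), hFi, hsum_erase]; ring
  rw [Finset.sum_sub_distrib] at key
  have : ∑ i' : V N, F i' = ∑ i' : V N, G i' + -4 * s i * m := by linarith
  rw [hF, hG, hm] at this
  simp only [hF, hG, hm, hs] at this ⊢; linarith

lemma H_flip_sub (hN : 3 ≤ N) (h : ℝ) (σ : Cfg N) (i : V N) :
    H N h (flip N σ i) - H N h σ =
      (spin (σ i) : ℝ) * (2 * ((∑ j ∈ nbrFinset N i, spin (σ j) : ℤ) : ℝ) + 2 * h) := by
  unfold H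
  rw [double_sum_flip N hN σ i, sum_spin_flip N σ i]
  push_cast
  ring

lemma susceptible_lt (hN : 3 ≤ N) {h : ℝ} (hh0 : 0 < h) (hh1 : h < 1) (σ : Cfg N)
    (i : V N) (hsu : susceptible N h σ i) : H N h (flip N σ i) < H N h σ := by
  refine lt_of_le_of_ne hsu (sub_ne_zero.mp ?_)
  rw [H_flip_sub N hN h σ i]
  set m : ℤ := ∑ j ∈ nbrFinset N i, spin (σ j) with hm
  apply mul_ne_zero
  · cases hσ : σ i <;> norm_num [spin]
  · rcases le_or_gt 0 m with hm0 | hm0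
    · have : (0:ℝ) ≤ (m:ℝ) := by exact_mod_cast hm0
      positivity
    · have h1 : (m:ℝ) ≤ -1 := by exact_mod_cast (by omega : m ≤ -1)
      have h2 : 2*(m:ℝ) + 2*h < 0 := by linarith
      exact ne_of_lt h2

/-- The limiting flip rate. -/
noncomputable def suscRate (h : ℝ) (σ : Cfg N) (i : V N) : ℝ :=
  if susceptible N h σ i then 1 / (N : ℝ) ^ 2 else 0

lemma tendsto_metroRate (h : ℝ) (σ : Cfg N) (i : V N) :
    Tendsto (fun β : ℝ => metroRate N h β σ i) atTop (𝓝 (suscRate N h σ i)) := by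
  by_cases hs : susceptible N h σ i
  · have hev : ∀ᶠ β : ℝ in atTop, metroRate N h β σ i = 1 / (N : ℝ) ^ 2 := by
      filter_upwards [eventually_ge_atTop (0:ℝ)] with β hβ
      have hd : H N h (flip N σ i) - H N h σ ≤ 0 := sub_nonpos.mpr hs
      have h1 : (1:ℝ) ≤ Real.exp (-β * (H N h (flip N σ i) - H N h σ)) := by
        rw [Real.one_le_exp_iff]
        nlinarith
      rw [metroRate, min_eq_left h1, mul_one]
    rw [suscRate, if_pos hs]
    exact tendsto_const_nhds.congr' (hev.mono fun β hβ => hβ.symm)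
  · have hd : 0 < H N h (flip N σ i) - H N h σ := by
      rw [susceptible] at hs
      linarith [lt_of_not_ge hs]
    have h1 : Tendsto (fun β : ℝ => Real.exp (-β * (H N h (flip N σ i) - H N h σ)))
        atTop (𝓝 0) := by
      apply Real.tendsto_exp_atBot.comp
      have h2 : Tendsto (fun β : ℝ => β * -(H N h (flip N σ i) - H N h σ)) atTop atBot :=
        Tendsto.atTop_mul_const_of_neg (by linarith) tendsto_id
      refine h2.congr fun β => by ring
    have h2 : Tendsto (fun β : ℝ =>
        min 1 (Real.exp (-β * (H N h (flip N σ i) - H N h σ)))) atTop (𝓝 (min 1 0)) :=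
      tendsto_const_nhds.min h1
    rw [suscRate, if_neg hs]
    have := h2.const_mul (1 / (N : ℝ) ^ 2)
    simpa [metroRate] using this

lemma ptilde_eq (h : ℝ) (σ η : Cfg N) :
    ptilde N h σ η = if η = σ then 1 - ∑ i : V N, suscRate N h σ i
      else ∑ i ∈ Finset.univ.filter (fun i => flip N σ i = η), suscRate N h σ i := by
  by_cases hη : η = σ
  · rw [if_pos hη, ptilde]
    apply Tendsto.limUnder_eq
    have he : ∀ β : ℝ, pβ N h β σ η = 1 - ∑ i : V N, metroRate N h β σ i :=
      fun β => if_pos hη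
    simp only [he]
    exact tendsto_const_nhds.sub
      (tendsto_finset_sum _ fun i _ => tendsto_metroRate N h σ i)
  · rw [if_neg hη, ptilde]
    apply Tendsto.limUnder_eq
    have he : ∀ β : ℝ, pβ N h β σ η
        = ∑ i ∈ Finset.univ.filter (fun i => flip N σ i = η), metroRate N h β σ i :=
      fun β => if_neg hη
    simp only [he]
    exact tendsto_finset_sum _ fun i _ => tendsto_metroRate N h σ i

lemma suscRate_nonneg (h : ℝ) (σ : Cfg N) (i : V N) : 0 ≤ suscRate N h σ i := by
  rw [suscRate]; split <;> positivity

lemma suscRate_le (h : ℝ) (σ : Cfg N) (i : V N) : suscRate N h σ i ≤ 1 / (N : ℝ) ^ 2 := by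
  rw [suscRate]; split
  · exact le_refl _
  · positivity

lemma sum_suscRate_le (h : ℝ) (σ : Cfg N) : ∑ i : V N, suscRate N h σ i ≤ 1 := by
  have hN0 : (N:ℝ) ≠ 0 := Nat.cast_ne_zero.mpr (NeZero.ne N)
  calc ∑ i : V N, suscRate N h σ i ≤ ∑ _i : V N, 1 / (N : ℝ) ^ 2 :=
        Finset.sum_le_sum fun i _ => suscRate_le N h σ i
    _ = 1 := by
        rw [Finset.sum_const, Finset.card_univ, nsmul_eq_mul]
        have hcard : Fintype.card (V N) = N * N := by
          simp [Fintype.card_prod, ZMod.card]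
        rw [hcard]
        push_cast
        field_simp

lemma Pmat_diag (h : ℝ) (σ : Cfg N) :
    Pmat N h σ σ = 1 - ∑ i : V N, suscRate N h σ i := by
  rw [Pmat, ptilde_eq, if_pos rfl]

lemma Pmat_ne (h : ℝ) (σ η : Cfg N) (hη : η ≠ σ) :
    Pmat N h σ η = ∑ i ∈ Finset.univ.filter (fun i => flip N σ i = η), suscRate N h σ i := by
  rw [Pmat, ptilde_eq, if_neg hη]

lemma Pmat_nonneg (h : ℝ) (σ η : Cfg N) : 0 ≤ Pmat N h σ η := by
  by_cases hη : η = σ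
  · rw [hη, Pmat_diag]; linarith [sum_suscRate_le N h σ]
  · rw [Pmat_ne N h σ η hη]
    exact Finset.sum_nonneg fun i _ => suscRate_nonneg N h σ i

lemma Pmat_row_sum (h : ℝ) (σ : Cfg N) : ∑ η : Cfg N, Pmat N h σ η = 1 := by
  rw [← Finset.add_sum_erase _ _ (Finset.mem_univ σ), Pmat_diag]
  have he : ∑ η ∈ Finset.univ.erase σ, Pmat N h σ η = ∑ i : V N, suscRate N h σ i := by
    rw [Finset.sum_congr rfl (fun η hη => Pmat_ne N h σ η (Finset.ne_of_mem_erase hη))]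
    exact Finset.sum_fiberwise_of_maps_to
      (fun i _ => Finset.mem_erase.mpr ⟨flip_ne N σ i, Finset.mem_univ _⟩) _
  rw [he]; ring

lemma Pmat_robust {h : ℝ} {σ : Cfg N} (hr : robust N h σ) (η : Cfg N) :
    Pmat N h σ η = if η = σ then 1 else 0 := by
  have hz : ∀ i : V N, suscRate N h σ i = 0 := fun i => if_neg (hr i)
  by_cases hη : η = σ
  · rw [if_pos hη, hη, Pmat_diag]
    simp [hz]
  · rw [if_neg hη, Pmat_ne N h σ η hη]
    simp [hz]

lemma pow_robust {h : ℝ} {σ : Cfg N} (hr : robust N h σ) :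
    ∀ (κ : ℕ) (η : Cfg N), (Pmat N h ^ κ) σ η = if η = σ then 1 else 0 := by
  intro κ
  induction κ with
  | zero =>
      intro η
      rw [pow_zero, Matrix.one_apply]
      exact if_congr eq_comm rfl rfl
  | succ κ IH =>
      intro η
      rw [pow_succ', Matrix.mul_apply]
      rw [Finset.sum_eq_single_of_mem σ (Finset.mem_univ σ)
        (fun τ _ hτ => by rw [Pmat_robust N hr τ, if_neg hτ, zero_mul])]
      rw [Pmat_robust N hr σ, if_pos rfl, one_mul]
      exact IH η

lemma pow_entry_nonneg (h : ℝ) : ∀ (κ : ℕ) (σ η : Cfg N), 0 ≤ (Pmat N h ^ κ) σ η := by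
  intro κ
  induction κ with
  | zero =>
      intro σ η
      rw [pow_zero, Matrix.one_apply]
      split <;> norm_num
  | succ κ IH =>
      intro σ η
      rw [pow_succ', Matrix.mul_apply]
      exact Finset.sum_nonneg fun τ _ => mul_nonneg (Pmat_nonneg N h σ τ) (IH τ η)

lemma pow_row_sum (h : ℝ) : ∀ (κ : ℕ) (σ : Cfg N), ∑ η : Cfg N, (Pmat N h ^ κ) σ η = 1 := by
  intro κ
  induction κ with
  | zero =>
      intro σ
      simp [Matrix.one_apply]
  | succ κ IH =>
      intro σ
      simp only [pow_succ', Matrix.mul_apply]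
      rw [Finset.sum_comm]
      calc ∑ τ : Cfg N, ∑ η : Cfg N, Pmat N h σ τ * (Pmat N h ^ κ) τ η
          = ∑ τ : Cfg N, Pmat N h σ τ * ∑ η : Cfg N, (Pmat N h ^ κ) τ η := by
            exact Finset.sum_congr rfl fun τ _ => (Finset.mul_sum _ _ _).symm
        _ = ∑ τ : Cfg N, Pmat N h σ τ := by
            exact Finset.sum_congr rfl fun τ _ => by rw [IH τ, mul_one]
        _ = 1 := Pmat_row_sum N h σ

/-- The mass on robust configurations after κ steps. -/
noncomputable def fU (h : ℝ) (κ : ℕ) (σ : Cfg N) : ℝ :=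
  ∑ η ∈ Uset N h, (Pmat N h ^ κ) σ η

lemma fU_nonneg (h : ℝ) (κ : ℕ) (σ : Cfg N) : 0 ≤ fU N h κ σ :=
  Finset.sum_nonneg fun η _ => pow_entry_nonneg N h κ σ η

lemma mem_Uset {h : ℝ} {σ : Cfg N} : σ ∈ Uset N h ↔ robust N h σ := by
  simp [Uset]

lemma fU_robust (h : ℝ) (κ : ℕ) {σ : Cfg N} (hr : robust N h σ) : fU N h κ σ = 1 := by
  rw [fU, Finset.sum_congr rfl (fun η _ => pow_robust N hr κ η),
    Finset.sum_ite_eq' (Uset N h) σ (fun _ => (1:ℝ)), if_pos (mem_Uset N |>.mpr hr)]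

lemma sum_Uset_Pmat_robust (h : ℝ) {τ : Cfg N} (hr : robust N h τ) :
    ∑ η ∈ Uset N h, Pmat N h τ η = 1 := by
  rw [Finset.sum_congr rfl (fun η _ => Pmat_robust N hr η),
    Finset.sum_ite_eq' (Uset N h) τ (fun _ => (1:ℝ)), if_pos (mem_Uset N |>.mpr hr)]

lemma fU_add (h : ℝ) (m n : ℕ) (σ : Cfg N) :
    fU N h (m + n) σ = ∑ τ : Cfg N, (Pmat N h ^ m) σ τ * fU N h n τ := by
  rw [fU]
  simp only [pow_add, Matrix.mul_apply]
  rw [Finset.sum_comm]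
  exact Finset.sum_congr rfl fun τ _ => (Finset.mul_sum _ _ _).symm

lemma fU_succ (h : ℝ) (n : ℕ) (σ : Cfg N) :
    fU N h (n + 1) σ = ∑ τ : Cfg N, Pmat N h σ τ * fU N h n τ := by
  have := fU_add N h 1 n σ
  rw [pow_one] at this
  rw [show n + 1 = 1 + n by ring, this]

lemma fU_le_succ (h : ℝ) (n : ℕ) (σ : Cfg N) : fU N h n σ ≤ fU N h (n + 1) σ := by
  have hend : fU N h (n + 1) σ
      = ∑ τ : Cfg N, (Pmat N h ^ n) σ τ * ∑ η ∈ Uset N h, Pmat N h τ η := by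
    have := fU_add N h n 1 σ
    rw [this]
    refine Finset.sum_congr rfl fun τ _ => ?_
    congr 1
    rw [fU]
    exact Finset.sum_congr rfl fun η _ => by rw [pow_one]
  rw [hend]
  have hsub : fU N h n σ
      = ∑ τ ∈ Uset N h, (Pmat N h ^ n) σ τ * ∑ η ∈ Uset N h, Pmat N h τ η := by
    rw [fU]
    refine Finset.sum_congr rfl fun τ hτ => ?_
    rw [sum_Uset_Pmat_robust N h (mem_Uset N |>.mp hτ), mul_one]
  rw [hsub]
  refine Finset.sum_le_sum_of_subset_of_nonneg (Finset.subset_univ _) fun τ _ _ =>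
    mul_nonneg (pow_entry_nonneg N h n σ τ)
      (Finset.sum_nonneg fun η _ => Pmat_nonneg N h τ η)

lemma fU_mono (h : ℝ) (σ : Cfg N) : Monotone (fun κ => fU N h κ σ) :=
  monotone_nat_of_le_succ fun n => fU_le_succ N h n σ

lemma exists_step (hN : 3 ≤ N) {h : ℝ} (hh0 : 0 < h) (hh1 : h < 1) (σ : Cfg N)
    (hnr : ¬ robust N h σ) :
    ∃ τ : Cfg N, H N h τ < H N h σ ∧ 1 / (N : ℝ) ^ 2 ≤ Pmat N h σ τ := by
  rw [robust] at hnr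
  push_neg at hnr
  obtain ⟨i, hi⟩ := hnr
  refine ⟨flip N σ i, susceptible_lt N hN hh0 hh1 σ i hi, ?_⟩
  rw [Pmat_ne N h σ _ (flip_ne N σ i)]
  have hmem : i ∈ Finset.univ.filter (fun i' => flip N σ i' = flip N σ i) := by simp
  have hss := Finset.single_le_sum (f := suscRate N h σ)
    (fun j _ => suscRate_nonneg N h σ j) hmem
  rwa [suscRate, if_pos hi] at hss

lemma lower_bound (hN : 3 ≤ N) {h : ℝ} (hh0 : 0 < h) (hh1 : h < 1) :
    ∀ (k : ℕ) (σ : Cfg N),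
      (Finset.univ.filter (fun η : Cfg N => H N h η < H N h σ)).card ≤ k →
      (1 / (N : ℝ) ^ 2) ^ k ≤ fU N h k σ := by
  have hN3 : (3:ℝ) ≤ (N:ℝ) := by exact_mod_cast hN
  have hNpos : (0:ℝ) < (N:ℝ) := by linarith
  have hc1 : 1 / (N:ℝ) ^ 2 ≤ 1 := by
    rw [div_le_one (by positivity)]
    nlinarith [hN3]
  intro k
  induction k with
  | zero =>
      intro σ hσ
      by_cases hr : robust N h σ
      · rw [fU_robust N h 0 hr]; norm_num
      · exfalso
        obtain ⟨τ, hτ, _⟩ := exists_step N hN hh0 hh1 σ hr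
        have hmem : τ ∈ Finset.univ.filter (fun η : Cfg N => H N h η < H N h σ) := by
          simp [hτ]
        have := Finset.card_pos.mpr ⟨τ, hmem⟩
        omega
  | succ k IH =>
      intro σ hσ
      by_cases hr : robust N h σ
      · rw [fU_robust N h (k+1) hr]
        exact pow_le_one₀ (by positivity) hc1
      · obtain ⟨τ, hτH, hτP⟩ := exists_step N hN hh0 hh1 σ hr
        have hτmem : τ ∈ Finset.univ.filter (fun η : Cfg N => H N h η < H N h σ) := by
          simp [hτH]
        have hcard : (Finset.univ.filter (fun η : Cfg N => H N h η < H N h τ)).card ≤ k := by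
          have hsub : Finset.univ.filter (fun η : Cfg N => H N h η < H N h τ)
              ⊆ (Finset.univ.filter (fun η : Cfg N => H N h η < H N h σ)).erase τ := by
            intro η hη
            simp only [Finset.mem_filter, Finset.mem_univ, true_and] at hη
            refine Finset.mem_erase.mpr ⟨fun he => ?_, ?_⟩
            · rw [he] at hη; exact lt_irrefl _ hη
            · simp only [Finset.mem_filter, Finset.mem_univ, true_and]
              linarith
          have h1 := Finset.card_le_card hsub
          rw [Finset.card_erase_of_mem hτmem] at h1
          have h2 := Finset.card_pos.mpr ⟨τ, hτmem⟩
          omega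
        have hIH := IH τ hcard
        rw [fU_succ]
        calc (1 / (N:ℝ) ^ 2) ^ (k+1) = (1 / (N:ℝ) ^ 2) * (1 / (N:ℝ) ^ 2) ^ k := by ring
          _ ≤ Pmat N h σ τ * fU N h k τ :=
              mul_le_mul hτP hIH (by positivity) (Pmat_nonneg N h σ τ)
          _ ≤ ∑ τ' : Cfg N, Pmat N h σ τ' * fU N h k τ' :=
              Finset.single_le_sum
                (fun τ' _ => mul_nonneg (Pmat_nonneg N h σ τ') (fU_nonneg N h k τ'))
                (Finset.mem_univ τ)

lemma contraction (hN : 3 ≤ N) {h : ℝ} (hh0 : 0 < h) (hh1 : h < 1) :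
    ∀ (j : ℕ) (σ : Cfg N),
      1 - fU N h (j * Fintype.card (Cfg N)) σ
        ≤ (1 - (1 / (N : ℝ) ^ 2) ^ Fintype.card (Cfg N)) ^ j := by
  set T : ℕ := Fintype.card (Cfg N) with hT
  set c : ℝ := (1 / (N : ℝ) ^ 2) ^ T with hc
  have hN3 : (3:ℝ) ≤ (N:ℝ) := by exact_mod_cast hN
  have hNpos : (0:ℝ) < (N:ℝ) := by linarith
  have hc0 : 0 < c := by rw [hc]; positivity
  have hc1 : c ≤ 1 := by
    rw [hc]
    refine pow_le_one₀ (by positivity) ?_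
    rw [div_le_one (by positivity)]
    nlinarith [hN3]
  have hfT : ∀ σ : Cfg N, c ≤ fU N h T σ := by
    intro σ
    exact lower_bound N hN hh0 hh1 T σ
      (le_trans (Finset.card_filter_le _ _) (by rw [Finset.card_univ]))
  intro j
  induction j with
  | zero =>
      intro σ
      simp only [Nat.zero_mul, pow_zero]
      linarith [fU_nonneg N h 0 σ]
  | succ j IH =>
      intro σ
      have hstep : fU N h ((j+1) * T) σ = ∑ τ : Cfg N, (Pmat N h ^ T) σ τ * fU N h (j * T) τ := by
        rw [show (j+1) * T = T + j * T by ring]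
        exact fU_add N h T (j * T) σ
      have hone : (1:ℝ) = ∑ τ : Cfg N, (Pmat N h ^ T) σ τ := (pow_row_sum N h T σ).symm
      have hrw : 1 - fU N h ((j+1) * T) σ
          = ∑ τ : Cfg N, (Pmat N h ^ T) σ τ * (1 - fU N h (j * T) τ) := by
        rw [hstep]
        nth_rewrite 1 [hone]
        rw [← Finset.sum_sub_distrib]
        exact Finset.sum_congr rfl fun τ _ => by ring
      rw [hrw]
      have hsplit := Finset.sum_add_sum_compl (Uset N h)
        (fun τ => (Pmat N h ^ T) σ τ * (1 - fU N h (j * T) τ))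
      have hUzero : ∑ τ ∈ Uset N h, (Pmat N h ^ T) σ τ * (1 - fU N h (j * T) τ) = 0 := by
        refine Finset.sum_eq_zero fun τ hτ => ?_
        rw [fU_robust N h (j * T) (mem_Uset N |>.mp hτ)]
        ring
      rw [← hsplit, hUzero, zero_add]
      have hbound : ∑ τ ∈ (Uset N h)ᶜ, (Pmat N h ^ T) σ τ * (1 - fU N h (j * T) τ)
          ≤ ∑ τ ∈ (Uset N h)ᶜ, (Pmat N h ^ T) σ τ * (1 - c) ^ j := by
        refine Finset.sum_le_sum fun τ _ => ?_
        exact mul_le_mul_of_nonneg_left (IH τ) (pow_entry_nonneg N h T σ τ)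
      refine le_trans hbound ?_
      rw [← Finset.sum_mul]
      have hcomp : ∑ τ ∈ (Uset N h)ᶜ, (Pmat N h ^ T) σ τ = 1 - fU N h T σ := by
        have := Finset.sum_add_sum_compl (Uset N h) (fun τ => (Pmat N h ^ T) σ τ)
        rw [pow_row_sum N h T σ] at this
        have hfU : fU N h T σ = ∑ τ ∈ Uset N h, (Pmat N h ^ T) σ τ := rfl
        linarith
      rw [hcomp]
      calc (1 - fU N h T σ) * (1 - c) ^ j ≤ (1 - c) * (1 - c) ^ j :=
            mul_le_mul_of_nonneg_right (by linarith [hfT σ])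
              (pow_nonneg (by linarith) j)
        _ = (1 - c) ^ (j + 1) := by ring

end Aux

/-- the probability that the low-temperature dynamics, started from
any post-decision configuration, is found in a robust configuration after κ steps
tends to 1 as κ → ∞, uniformly in the configuration and the action. -/
theorem robust_mass_to_one (N : ℕ) [NeZero N] (hN : 3 ≤ N)
    (h : ℝ) (hh0 : 0 < h) (hh1 : h < 1) :
    ∀ ε > 0, ∃ K : ℕ, ∀ κ ≥ K, ∀ (σ : Cfg N) (a : Act N),
      1 - ε ≤ ∑ η ∈ Uset N h, Ptilκ N h κ σ a η := by
  intro ε hε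
  set T : ℕ := Fintype.card (Cfg N) with hT
  set c : ℝ := (1 / (N : ℝ) ^ 2) ^ T with hc
  have hN3 : (3:ℝ) ≤ (N:ℝ) := by exact_mod_cast hN
  have hNpos : (0:ℝ) < (N:ℝ) := by linarith
  have hc0 : 0 < c := by rw [hc]; positivity
  have hc1 : c ≤ 1 := by
    rw [hc]
    refine pow_le_one₀ (by positivity) ?_
    rw [div_le_one (by positivity)]
    nlinarith [hN3]
  have hq0 : 0 ≤ 1 - c := by linarith
  have hq1 : 1 - c < 1 := by linarith
  have htend : Tendsto (fun j : ℕ => (1 - c) ^ j) atTop (𝓝 0) :=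
    tendsto_pow_atTop_nhds_zero_of_lt_one hq0 hq1
  obtain ⟨j, hj⟩ := (htend.eventually (gt_mem_nhds hε)).exists
  refine ⟨j * T, fun κ hκ σ a => ?_⟩
  have hf : ∑ η ∈ Uset N h, Ptilκ N h κ σ a η = fU N h κ (post N σ a) := rfl
  rw [hf]
  have h1 : fU N h (j * T) (post N σ a) ≤ fU N h κ (post N σ a) :=
    fU_mono N h (post N σ a) hκ
  have h2 := contraction N hN hh0 hh1 j (post N σ a)
  rw [← hT, ← hc] at h2
  linarith

end IsingS
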